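/- There exists a Markov chain U - X - Y of finite-valued random variables such that I(U;Y) > ρ_m(X;Y)² · I(U;X). Specifically, let X ∼ Bernoulli(1/2) on {0,1}, let Y ∈ {0,E,1} be obtained from X via the channel with P(Y=0|X=0)=2/3, P(Y=E|X=0)=1/3, P(Y=E|X=1)=1/2, P(Y=1|X=1)=1/2, and let U ∈ {0,1} satisfy U - X - Y with P(U=1|X=0)=0.1, P(U=1|X=1)=0.4; then ρ_m(X;Y)² = 0.6 and I(U;Y)/I(U;X) > 0.6. -/

import Mathlib

open scoped BigOperators

noncomputable section

/-- `p` is a probability mass function on a finite type. -/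
def IsPMF {X : Type*} [Fintype X] (p : X → ℝ) : Prop :=
  (∀ x, 0 ≤ p x) ∧ ∑ x, p x = 1

/-- `p` is a joint probability mass function. -/
def IsJointPMF {X Y : Type*} [Fintype X] [Fintype Y] (p : X → Y → ℝ) : Prop :=
  (∀ x y, 0 ≤ p x y) ∧ ∑ x, ∑ y, p x y = 1

/-- Hirschfeld–Gebelein–Rényi maximal correlation of a joint pmf `p`. -/
def maxCorr {X Y : Type*} [Fintype X] [Fintype Y] (p : X → Y → ℝ) : ℝ :=
  sSup {c : ℝ | ∃ f : X → ℝ, ∃ g : Y → ℝ,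
    (∑ x, ∑ y, p x y * f x) = 0 ∧ (∑ x, ∑ y, p x y * g y) = 0 ∧
    (∑ x, ∑ y, p x y * (f x)^2) = 1 ∧ (∑ x, ∑ y, p x y * (g y)^2) = 1 ∧
    c = ∑ x, ∑ y, p x y * f x * g y}

/-- Relative entropy (KL divergence) between pmfs on a finite type. -/
def KL {X : Type*} [Fintype X] (r p : X → ℝ) : ℝ :=
  ∑ x, r x * Real.log (r x / p x)

/-- `s*(X;Y)` for input distribution `p` and channel `W`. -/
def sStar {X Y : Type*} [Fintype X] [Fintype Y] (p : X → ℝ) (W : X → Y → ℝ) : ℝ :=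
  sSup {c : ℝ | ∃ r : X → ℝ, IsPMF r ∧ r ≠ p ∧
    c = KL (fun y => ∑ x, r x * W x y) (fun y => ∑ x, p x * W x y) / KL r p}

/-- Shannon entropy of a pmf on a finite type. -/
def entropy {X : Type*} [Fintype X] (p : X → ℝ) : ℝ :=
  ∑ x, Real.negMulLog (p x)

/-- Mutual information of a joint pmf. -/
def mutInfo {X Y : Type*} [Fintype X] [Fintype Y] (p : X → Y → ℝ) : ℝ :=
  entropy (fun x => ∑ y, p x y) + entropy (fun y => ∑ x, p x y)
    - entropy (fun z : X × Y => p z.1 z.2)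

end

/-- `X ∼ Bernoulli(1/2)`. -/
noncomputable def pX : Fin 2 → ℝ := fun _ => 1/2

/-- The asymmetric erasure channel: `Y ∈ {0, E, 1}` encoded as `Fin 3` with `E = 1`. -/
noncomputable def Wch : Fin 2 → Fin 3 → ℝ := ![![2/3, 1/3, 0], ![0, 1/2, 1/2]]

/-- Joint pmf of `(X,Y)`. -/
noncomputable def pXY : Fin 2 → Fin 3 → ℝ := fun x y => pX x * Wch x y

/-- `P(U = u | X = x)` (row `x`): `U|X=0 ∼ Ber(0.1)`, `U|X=1 ∼ Ber(0.4)`. -/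
noncomputable def condU : Fin 2 → Fin 2 → ℝ := ![![9/10, 1/10], ![3/5, 2/5]]

/-- Joint pmf of `(U,X)` (so that `U - X - Y` is a Markov chain). -/
noncomputable def qUX : Fin 2 → Fin 2 → ℝ := fun u x => pX x * condU x u

/-- Joint pmf of `(U,Y)` induced through the channel. -/
noncomputable def qUY : Fin 2 → Fin 3 → ℝ := fun u y => ∑ x, qUX u x * Wch x y


/-! ### Auxiliary lemmas -/

private theorem log_rat (n2 n3 n5 n7 : ℤ) (q : ℝ) (h : q = 2^n2 * 3^n3 * 5^n5 * 7^n7) :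
    Real.log q = n2 * Real.log 2 + n3 * Real.log 3 + n5 * Real.log 5 + n7 * Real.log 7 := by
  subst h
  rw [Real.log_mul (by positivity) (by positivity), Real.log_mul (by positivity) (by positivity),
    Real.log_mul (by positivity) (by positivity), Real.log_zpow, Real.log_zpow, Real.log_zpow,
    Real.log_zpow]

set_option maxHeartbeats 1000000 in
private theorem maxCorr_val : maxCorr pXY = Real.sqrt (3/5) := by
  obtain ⟨s, hs0, hss⟩ : ∃ s : ℝ, 0 ≤ s ∧ s * s = 5/3 :=
    ⟨Real.sqrt (5/3), Real.sqrt_nonneg _, Real.mul_self_sqrt (by norm_num)⟩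
  have hsq : Real.sqrt (3/5) = 3/5 * s := by
    have h1 : ((3:ℝ)/5) = (3/5*s)^2 := by nlinarith
    calc Real.sqrt (3/5) = Real.sqrt ((3/5*s)^2) := by rw [← h1]
    _ = 3/5*s := Real.sqrt_sq (by nlinarith)
  apply IsGreatest.csSup_eq
  constructor
  · rw [hsq]
    refine ⟨![1, -1], ![s, -(1/5)*s, -s], ?_, ?_, ?_, ?_, ?_⟩ <;>
      simp [pXY, pX, Wch, Fin.sum_univ_succ] <;> nlinarith [hss]
  · rintro c ⟨f, g, h1, h2, h3, h4, hc⟩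
    simp [pXY, pX, Wch, Fin.sum_univ_succ] at h1 h2 h3 h4 hc
    rcases le_or_gt c 0 with h | h
    · exact h.trans (Real.sqrt_nonneg _)
    · rw [show c = |c| from (abs_of_pos h).symm, ← Real.sqrt_sq_eq_abs]
      apply Real.sqrt_le_sqrt
      have hf1 : f 1 = -f 0 := by linarith
      have hL : c = f 0 * (1/3*g 0 - 1/12*g 1 - 1/4*g 2) := by rw [hc, hf1]; ring
      rw [hf1] at h3
      have hf0 : f 0 ^ 2 = 1 := by nlinarith
      have hc2 : c^2 = (1/3*g 0 - 1/12*g 1 - 1/4*g 2)^2 := by rw [hL, mul_pow, hf0, one_mul]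
      rw [hc2]
      nlinarith [sq_nonneg (g 0 + g 2), sq_nonneg (g 0 + 5*g 1), sq_nonneg (5*g 1 - g 2)]

private theorem mutInfo_qUX :
    mutInfo qUX = 17/10*Real.log 2 + 9/20*Real.log 3 - Real.log 5 := by
  simp [mutInfo, entropy, Fintype.sum_prod_type, Fin.sum_univ_succ, qUX, pX, condU,
    Real.negMulLog]
  norm_num
  rw [log_rat (-2) 1 0 0 ((3:ℝ)/4) (by norm_num), log_rat (-2) 0 0 0 ((1:ℝ)/4) (by norm_num),
      log_rat (-1) 0 0 0 ((1:ℝ)/2) (by norm_num), log_rat 0 0 (-1) 0 ((1:ℝ)/5) (by norm_num),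
      log_rat (-2) 0 (-1) 0 ((1:ℝ)/20) (by norm_num),
      log_rat (-1) 1 (-1) 0 ((3:ℝ)/10) (by norm_num),
      log_rat (-2) 2 (-1) 0 ((9:ℝ)/20) (by norm_num)]
  push_cast; ring

private theorem mutInfo_qUY :
    mutInfo qUY = 31/15*Real.log 2 + 3/5*Real.log 3 - 17/12*Real.log 5 + 7/60*Real.log 7 := by
  simp [mutInfo, entropy, Fintype.sum_prod_type, Fin.sum_univ_succ, qUY, qUX, pX, condU, Wch,
    Real.negMulLog]
  norm_num
  rw [log_rat (-2) 1 0 0 ((3:ℝ)/4) (by norm_num), log_rat (-2) 0 0 0 ((1:ℝ)/4) (by norm_num),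
      log_rat 0 (-1) 0 0 ((1:ℝ)/3) (by norm_num), log_rat (-2) (-1) 1 0 ((5:ℝ)/12) (by norm_num),
      log_rat (-1) 1 (-1) 0 ((3:ℝ)/10) (by norm_num),
      log_rat (-2) 1 (-1) 0 ((3:ℝ)/20) (by norm_num),
      log_rat (-1) (-1) (-1) 0 ((1:ℝ)/30) (by norm_num),
      log_rat (-2) (-1) (-1) 1 ((7:ℝ)/60) (by norm_num),
      log_rat (-1) 0 (-1) 0 ((1:ℝ)/10) (by norm_num)]
  push_cast; ring

private theorem key_log_ineq :
    (245:ℝ) * Real.log 5 < 314 * Real.log 2 + 99 * Real.log 3 + 35 * Real.log 7 := by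
  have h1 : (245:ℝ) * Real.log 5 = Real.log ((5:ℝ)^(245:ℕ)) := by
    rw [Real.log_pow]; push_cast; ring
  have h2 : (314:ℝ) * Real.log 2 + 99 * Real.log 3 + 35 * Real.log 7
      = Real.log ((2:ℝ)^(314:ℕ) * 3^(99:ℕ) * 7^(35:ℕ)) := by
    rw [Real.log_mul (by positivity) (by positivity),
      Real.log_mul (by positivity) (by positivity), Real.log_pow, Real.log_pow, Real.log_pow]
    push_cast; ring
  rw [h1, h2]
  exact Real.log_lt_log (by positivity) (by rw [show (2:ℝ)^(314:ℕ) = 2^157 * 2^157 from by rw [← pow_add]]; norm_num)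

theorem erkip_cover_counterexample :
    (maxCorr pXY)^2 = 3/5 ∧ mutInfo qUY > (maxCorr pXY)^2 * mutInfo qUX := by
  have hm : (maxCorr pXY)^2 = 3/5 := by
    rw [maxCorr_val]; exact Real.sq_sqrt (by norm_num)
  refine ⟨hm, ?_⟩
  rw [hm, mutInfo_qUX, mutInfo_qUY]
  have := key_log_ineq
  linarith
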